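/- arXiv:2503.07646 — 4 statements merged into one kernel-verified Lean document; each statement's English description precedes it below -/
import Mathlib

section
/- If 0 ≤ c⁺ ≤ 1 and −1 ≤ c⁻ ≤ 0, then for every real k, c⁺c⁻ − cos²(k/2) + ((c⁻)² + (c⁺)²)cos²(k/2) + (c⁻)²(c⁺)²(1 − cos²(k/2)) ≤ 0. -/
/-- If `0 ≤ c⁺ ≤ 1` and `−1 ≤ c⁻ ≤ 0`, then for every wave-number `k`,
`c⁺c⁻ − cos²(k/2) + ((c⁻)² + (c⁺)²)cos²(k/2) + (c⁻)²(c⁺)²(1 − cos²(k/2)) ≤ 0`. -/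
theorem schur_condition_three (cp cm : ℝ)
    (h1 : 0 ≤ cp) (h2 : cp ≤ 1) (h3 : -1 ≤ cm) (h4 : cm ≤ 0) (k : ℝ) :
    cp * cm - Real.cos (k / 2) ^ 2 + (cm ^ 2 + cp ^ 2) * Real.cos (k / 2) ^ 2 +
      cm ^ 2 * cp ^ 2 * (1 - Real.cos (k / 2) ^ 2) ≤ 0 := by
  have hc0 : (0:ℝ) ≤ Real.cos (k / 2) ^ 2 := sq_nonneg _
  have hc1 : Real.cos (k / 2) ^ 2 ≤ 1 := Real.cos_sq_le_one _
  set c := Real.cos (k / 2) ^ 2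
  obtain ⟨b, hb⟩ : ∃ b, cm = -b := ⟨-cm, by ring⟩
  subst hb
  have hb0 : 0 ≤ b := by linarith
  have hb1 : b ≤ 1 := by linarith
  have hab : 0 ≤ cp * b := mul_nonneg h1 hb0
  have hab1 : cp * b ≤ 1 := by nlinarith
  have h5 : cp ^ 2 * b ^ 2 ≤ cp * b := by nlinarith [mul_nonneg hab (sub_nonneg.2 hab1)]
  have h6 : cp ^ 2 + b ^ 2 ≤ 1 + cp * b := by
    nlinarith [mul_nonneg (sub_nonneg.2 h2) (sub_nonneg.2 hb1)]
  have key1 : (1 - c) * (cp ^ 2 * b ^ 2) ≤ (1 - c) * (cp * b) :=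
    mul_le_mul_of_nonneg_left h5 (by linarith)
  have key2 : c * (cp ^ 2 + b ^ 2) ≤ c * (1 + cp * b) :=
    mul_le_mul_of_nonneg_left h6 hc0
  have hc1' : c * (cp * b) ≤ cp * b := by nlinarith
  nlinarith [key1, key2, hc1']
end

section
/- Let c⁺ > c⁻ be real numbers. If for all k ∈ [0, 2π] the inequality c⁺c⁻ − cos²(k/2) + ((c⁻)² + (c⁺)²)cos²(k/2) + (c⁻)²(c⁺)²(1 − cos²(k/2)) ≤ 0 holds together with c⁺c⁻((c⁺)² − 1)((c⁻)² − 1) ≤ 0, then 0 ≤ c⁺ ≤ 1 and −1 ≤ c⁻ ≤ 0 (i.e., c⁺c⁻ ≤ 0, |c⁺| ≤ 1 and |c⁻| ≤ 1). -/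
/-- If for all `k ∈ [0, 2π]` the `k`-dependent Schur condition holds together with
`c⁺c⁻((c⁺)² − 1)((c⁻)² − 1) ≤ 0`, then `0 ≤ c⁺ ≤ 1` and `−1 ≤ c⁻ ≤ 0`. -/
theorem schur_conditions_imply_bounds (cp cm : ℝ) (h : cm < cp)
    (hk : ∀ k ∈ Set.Icc (0 : ℝ) (2 * Real.pi),
      cp * cm - Real.cos (k / 2) ^ 2 + (cm ^ 2 + cp ^ 2) * Real.cos (k / 2) ^ 2 +
        cm ^ 2 * cp ^ 2 * (1 - Real.cos (k / 2) ^ 2) ≤ 0)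
    (h2 : cp * cm * (cp ^ 2 - 1) * (cm ^ 2 - 1) ≤ 0) :
    0 ≤ cp ∧ cp ≤ 1 ∧ -1 ≤ cm ∧ cm ≤ 0 := by
  have pi_pos := Real.pi_pos
  have h0 := hk 0 ⟨le_refl 0, by linarith⟩
  have hpi := hk Real.pi ⟨by linarith, by linarith⟩
  simp [Real.cos_pi_div_two] at h0 hpi
  have hA : cp * cm + cm ^ 2 + cp ^ 2 ≤ 1 := by nlinarith [h0]
  have hB : cp * cm + cm ^ 2 * cp ^ 2 ≤ 0 := by nlinarith [hpi]
  have hpm : cp * cm ≤ 0 := by nlinarith [sq_nonneg (cp * cm)]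
  have hcp : 0 ≤ cp := by
    by_contra hc
    push_neg at hc
    nlinarith [mul_pos (neg_pos.mpr (h.trans hc)) (neg_pos.mpr hc)]
  have hcm : cm ≤ 0 := by
    by_contra hc
    push_neg at hc
    nlinarith [mul_pos (hc.trans h) hc]
  have hcp1 : cp ≤ 1 := by
    by_contra hc
    push_neg at hc
    rcases eq_or_lt_of_le hcm with hcm0 | hcm0
    · nlinarith
    · have hm : cm ≤ -1 := by
        by_contra hm
        push_neg at hm
        have ha : 0 < -(cp * cm) := by nlinarith
        have hb : 0 < cp ^ 2 - 1 := by nlinarith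
        have hcc : 0 < 1 - cm ^ 2 := by nlinarith
        nlinarith [mul_pos (mul_pos ha hb) hcc]
      nlinarith [sq_nonneg (cp + cm)]
  have hcm1 : -1 ≤ cm := by
    by_contra hc
    push_neg at hc
    rcases eq_or_lt_of_le hcp with hcp0 | hcp0
    · nlinarith
    · have hm : 1 ≤ cp := by
        by_contra hm
        push_neg at hm
        have ha : 0 < -(cp * cm) := by nlinarith
        have hb : 0 < cm ^ 2 - 1 := by nlinarith
        have hcc : 0 < 1 - cp ^ 2 := by nlinarith
        nlinarith [mul_pos (mul_pos ha hcc) hb]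
      nlinarith [sq_nonneg (cp + cm)]
  exact ⟨hcp, hcp1, hcm1, hcm⟩
end

section
/- The 3×3 matrix M with rows [k·u, ρk_x, ρk_y], [(π*/ρ + ∂ρπ*)k_x, k·u + i(νk² + ηk_x²), iηk_xk_y], [(π*/ρ + ∂ρπ*)k_y, iηk_xk_y, k·u + i(νk² + ηk_y²)] has eigenvalues ω_shear = k·u + iνk², ω_ac± = k·u ± k√(∂ρ(ρπ*)) + i((ν+η)/2)k² up to terms of order O(k³) in the imaginary part; exactly, its characteristic polynomial factorizes so that one eigenvalue is k·u + iνk² when k ≠ 0. -/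
open Complex in
/-- The 3×3 Navier–Stokes symbol matrix `M` of the linearized non-ideal compressible
equations has, exactly, the shear eigenvalue `ω_shear = k·u + iνk²` when `k ≠ 0`:
its characteristic polynomial vanishes at `ω_shear`. -/
theorem ns_symbol_shear_eigenvalue (kx ky ux uy ρ ν η πs dπs : ℝ)
    (hρ : 0 < ρ) (hν : 0 ≤ ν) (hη : 0 ≤ η) (hsound : 0 ≤ πs + ρ * dπs)
    (hk : (kx, ky) ≠ (0, 0))
    (k2 : ℝ) (hk2 : k2 = kx ^ 2 + ky ^ 2)
    (ku : ℝ) (hku : ku = kx * ux + ky * uy)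
    (M : Matrix (Fin 3) (Fin 3) ℂ)
    (hM : M = !![(ku : ℂ), (ρ * kx : ℝ), (ρ * ky : ℝ);
      ((πs / ρ + dπs) * kx : ℝ), (ku : ℂ) + Complex.I * ((ν * k2 + η * kx ^ 2 : ℝ)),
        Complex.I * ((η * kx * ky : ℝ));
      ((πs / ρ + dπs) * ky : ℝ), Complex.I * ((η * kx * ky : ℝ)),
        (ku : ℂ) + Complex.I * ((ν * k2 + η * ky ^ 2 : ℝ))]) :
    Matrix.det (M - ((ku : ℂ) + Complex.I * (ν * k2 : ℝ)) • (1 : Matrix (Fin 3) (Fin 3) ℂ))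
      = 0 := by
  subst hM hk2 hku
  simp [Matrix.det_fin_three, Matrix.smul_apply, Matrix.one_apply]
  push_cast
  ring
end

section
/- For the generic velocity-dependent pressure π*(ρ,u), the eigenvalues of the flux Jacobian of the system ∂tρ + ∂x(ρu) = 0, ∂t(ρu) + ∂x(ρu² + ρπ*) = 0 are c± = u + (∂_uπ*)/2 ± √(((∂_uπ*)/2)² + ∂ρ(ρπ*)), provided the discriminant ((∂_uπ*)/2)² + ∂ρ(ρπ*) is nonnegative; these are always real, so the system is hyperbolic whenever ∂ρ(ρπ*) ≥ 0. -/
/-- For a generic velocity-dependent pressure `π*(ρ,u)`, the eigenvalues of the flux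
Jacobian of the system (in conserved variables, the Jacobian is
`!![0, 1; −u² + ∂ρ(ρπ*) − u∂ᵤπ*, 2u + ∂ᵤπ*]`) are
`c± = u + (∂ᵤπ*)/2 ± √(((∂ᵤπ*)/2)² + ∂ρ(ρπ*))` whenever the discriminant is
nonnegative; in particular the discriminant is nonnegative (hyperbolicity) whenever
`∂ρ(ρπ*) ≥ 0`. -/
theorem generalized_flux_jacobian_eigenvalues (πs : ℝ → ℝ → ℝ) (ρ u : ℝ)
    (dρ du : ℝ)
    (hdρ : dρ = deriv (fun r => r * πs r u) ρ)
    (hdu : du = deriv (fun v => πs ρ v) u)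
    (A : Matrix (Fin 2) (Fin 2) ℝ)
    (hA : A = !![0, 1; -u ^ 2 + dρ - u * du, 2 * u + du]) :
    (0 ≤ dρ → 0 ≤ (du / 2) ^ 2 + dρ) ∧
    (0 ≤ (du / 2) ^ 2 + dρ →
      Matrix.det (A - (u + du / 2 + Real.sqrt ((du / 2) ^ 2 + dρ)) •
        (1 : Matrix (Fin 2) (Fin 2) ℝ)) = 0 ∧
      Matrix.det (A - (u + du / 2 - Real.sqrt ((du / 2) ^ 2 + dρ)) •
        (1 : Matrix (Fin 2) (Fin 2) ℝ)) = 0) := by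
  subst hA
  constructor
  · intro h
    positivity
  · intro h
    have hs : Real.sqrt ((du / 2) ^ 2 + dρ) ^ 2 = (du / 2) ^ 2 + dρ := Real.sq_sqrt h
    rw [show (du / 2) ^ 2 + dρ = du ^ 2 * (1/4) + dρ by ring] at hs
    constructor <;>
    · simp [Matrix.det_fin_two, Matrix.one_fin_two, Matrix.smul_of]
      ring_nf
      nlinarith [hs]
end
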